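/- For every integer d ≥ 2 and all real numbers δ, w with 0 < δ ≤ w ≤ π, the normalized cap volumes satisfy V(w)/V(δ) ≤ (w/δ)^d. -/

import Mathlib

open scoped Real InnerProductSpace
open MeasureTheory Filter

noncomputable section

/-- The `d`-dimensional unit sphere `S^d`, as a subtype of `ℝ^{d+1}`. -/
abbrev Sph (d : ℕ) := Metric.sphere (0 : EuclideanSpace ℝ (Fin (d + 1))) 1

/-- Geodesic distance `ρ(x,y) = arccos⟨x,y⟩` on the sphere. -/
def geoDist {d : ℕ} (x y : Sph d) : ℝ :=
  Real.arccos ⟪(x : EuclideanSpace ℝ (Fin (d + 1))), (y : EuclideanSpace ℝ (Fin (d + 1)))⟫_ℝ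

/-- Spherical cap (geodesic ball) with center `x` and geodesic radius `φ`. -/
def cap {d : ℕ} (x : Sph d) (φ : ℝ) : Set (Sph d) :=
  {y : Sph d | geoDist x y ≤ φ}

/-- Normalized volume of a spherical cap of geodesic radius `φ` on `S^d`,
given by `V(φ) = (∫_0^φ sin^{d-1} t dt) / (2 ∫_0^{π/2} sin^{d-1} t dt)`. -/
def capVolInt (d : ℕ) (φ : ℝ) : ℝ :=
  (∫ t in (0 : ℝ)..φ, Real.sin t ^ (d - 1)) /
    (2 * ∫ t in (0 : ℝ)..(π / 2), Real.sin t ^ (d - 1))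

/-- Concavity of `sin` on `[0, π]` gives `sin (l s) ≤ l sin s` for `l ≥ 1`. -/
lemma sin_mul_le' {l s : ℝ} (hl : 1 ≤ l) (hs : 0 ≤ s) (h : l * s ≤ π) :
    Real.sin (l * s) ≤ l * Real.sin s := by
  have hl0 : (0:ℝ) < l := lt_of_lt_of_le one_pos hl
  have hmem : l * s ∈ Set.Icc (0:ℝ) π := ⟨mul_nonneg hl0.le hs, h⟩
  have h0 : (0:ℝ) ∈ Set.Icc (0:ℝ) π := ⟨le_refl _, Real.pi_pos.le⟩
  have ha : (0:ℝ) ≤ 1/l := by positivity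
  have hb : (0:ℝ) ≤ 1 - 1/l := by
    have : 1/l ≤ 1 := by
      rw [div_le_one hl0]; exact hl
    linarith
  have hab : 1/l + (1 - 1/l) = 1 := by ring
  have hc := strictConcaveOn_sin_Icc.concaveOn.2 hmem h0 ha hb hab
  simp only [smul_eq_mul, mul_zero, Real.sin_zero, add_zero] at hc
  rw [show 1/l * (l*s) = s by field_simp] at hc
  calc Real.sin (l * s) = l * (1/l * Real.sin (l*s)) := by field_simp
    _ ≤ l * Real.sin s := by
        exact mul_le_mul_of_nonneg_left hc hl0.le

lemma sinpow_int_pos (n : ℕ) {b : ℝ} (hb : 0 < b) (hbπ : b ≤ π) :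
    0 < ∫ t in (0:ℝ)..b, Real.sin t ^ n := by
  apply intervalIntegral.intervalIntegral_pos_of_pos_on
  · exact (Real.continuous_sin.pow n).intervalIntegrable 0 b
  · intro x hx
    exact pow_pos (Real.sin_pos_of_pos_of_lt_pi hx.1 (lt_of_lt_of_le hx.2 hbπ)) n
  · exact hb

lemma key_int (n : ℕ) {δ w : ℝ} (hδ : 0 < δ) (hδw : δ ≤ w) (hw : w ≤ π) :
    (∫ t in (0:ℝ)..w, Real.sin t ^ n) ≤ (w/δ)^(n+1) * ∫ t in (0:ℝ)..δ, Real.sin t ^ n := by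
  set l := w / δ with hl
  have hl1 : 1 ≤ l := (one_le_div hδ).2 hδw
  have hl0 : (0:ℝ) < l := lt_of_lt_of_le one_pos hl1
  have hlδ : l * δ = w := div_mul_cancel₀ w hδ.ne'
  have hsub : l • (∫ s in (0:ℝ)..δ, Real.sin (l * s) ^ n) = ∫ t in (0:ℝ)..w, Real.sin t ^ n := by
    have := intervalIntegral.smul_integral_comp_mul_left (a := (0:ℝ)) (b := δ)
      (fun t => Real.sin t ^ n) l
    simpa [hlδ] using this
  have hmono : (∫ s in (0:ℝ)..δ, Real.sin (l * s) ^ n)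
      ≤ ∫ s in (0:ℝ)..δ, (l * Real.sin s) ^ n := by
    apply intervalIntegral.integral_mono_on hδ.le
    · exact ((Real.continuous_sin.comp (continuous_const.mul continuous_id)).pow n).intervalIntegrable 0 δ
    · exact ((continuous_const.mul Real.continuous_sin).pow n).intervalIntegrable 0 δ
    · intro s hs
      have hls : l * s ≤ π := by
        calc l * s ≤ l * δ := by nlinarith [hs.2, hs.1]
          _ = w := hlδ
          _ ≤ π := hw
      have h1 : Real.sin (l * s) ≤ l * Real.sin s := sin_mul_le' hl1 hs.1 hls
      have h2 : 0 ≤ Real.sin (l * s) := Real.sin_nonneg_of_nonneg_of_le_pi (mul_nonneg hl0.le hs.1) hls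
      exact pow_le_pow_left₀ h2 h1 n
  calc (∫ t in (0:ℝ)..w, Real.sin t ^ n)
      = l * ∫ s in (0:ℝ)..δ, Real.sin (l * s) ^ n := by rw [← hsub, smul_eq_mul]
    _ ≤ l * ∫ s in (0:ℝ)..δ, (l * Real.sin s) ^ n := mul_le_mul_of_nonneg_left hmono hl0.le
    _ = l^(n+1) * ∫ s in (0:ℝ)..δ, Real.sin s ^ n := by
        rw [show (fun s => (l * Real.sin s) ^ n) = fun s => l^n * Real.sin s ^ n from
          funext fun s => mul_pow _ _ _]
        rw [intervalIntegral.integral_const_mul]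
        ring

/-- For every `d ≥ 2` and `0 < δ ≤ w ≤ π`,
`V(w)/V(δ) ≤ (w/δ)^d`. -/
theorem capVolInt_ratio_le (d : ℕ) (hd : 2 ≤ d) (δ w : ℝ)
    (hδ : 0 < δ) (hδw : δ ≤ w) (hw : w ≤ π) :
    capVolInt d w / capVolInt d δ ≤ (w / δ) ^ d := by
  have hδπ : δ ≤ π := le_trans hδw hw
  set n := d - 1 with hn
  have hd1 : n + 1 = d := Nat.succ_pred_eq_of_pos (lt_of_lt_of_le (by norm_num) hd)
  have hC : 0 < 2 * ∫ t in (0:ℝ)..(π/2), Real.sin t ^ n :=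
    mul_pos two_pos (sinpow_int_pos n (by positivity) (by linarith [Real.pi_pos]))
  have hFδ : 0 < ∫ t in (0:ℝ)..δ, Real.sin t ^ n := sinpow_int_pos n hδ hδπ
  have hkey := key_int n hδ hδw hw
  rw [hd1] at hkey
  have hratio : capVolInt d w / capVolInt d δ
      = (∫ t in (0:ℝ)..w, Real.sin t ^ n) / (∫ t in (0:ℝ)..δ, Real.sin t ^ n) := by
    unfold capVolInt
    rw [← hn]
    field_simp
    exact mul_div_cancel_right₀ _ (ne_of_gt (by linarith))
  rw [hratio, div_le_iff₀ hFδ]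
  exact hkey
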